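/- If x* ∈ D is a Nash equilibrium of the client game (i.e., for every player i and every unilateral deviation t ≥ 0 with t + ∑_{j ≠ i} x* j < μ, one has u i (Function.update x* i t) ≤ u i (x*)), then x* maximizes H over D; combined with strict concavity, the Nash equilibrium of the client game is unique. -/

import Mathlib

open Filter Set

lemma log_concave_aux {x y s : ℝ} (hx : 0 ≤ x) (hy : 0 ≤ y) (hs0 : 0 ≤ s) (hs1 : s ≤ 1) :
    (1 - s) * Real.log (1 + x) + s * Real.log (1 + y)
      ≤ Real.log (1 + ((1 - s) * x + s * y)) := by
  have h := strictConcaveOn_log_Ioi.concaveOn.2 (x := 1 + x) (y := 1 + y)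
    (by simp; linarith) (by simp; linarith) (by linarith : (0:ℝ) ≤ 1 - s) hs0 (by ring)
  simp only [smul_eq_mul] at h
  have he : (1 - s) * (1 + x) + s * (1 + y) = 1 + ((1 - s) * x + s * y) := by ring
  rwa [he] at h

lemma log_strict_mid {x y : ℝ} (hx : 0 ≤ x) (hy : 0 ≤ y) (hne : x ≠ y) :
    (Real.log (1 + x) + Real.log (1 + y)) / 2 < Real.log (1 + (x + y) / 2) := by
  have h := strictConcaveOn_log_Ioi.2 (x := 1 + x) (y := 1 + y)
    (by simp; linarith) (by simp; linarith) (by intro h; apply hne; linarith)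
    (by norm_num : (0:ℝ) < 1/2) (by norm_num : (0:ℝ) < 1/2) (by norm_num)
  simp only [smul_eq_mul] at h
  have he : (1/2 : ℝ) * (1 + x) + (1/2 : ℝ) * (1 + y) = 1 + (x + y) / 2 := by ring
  rw [he] at h
  linarith

lemma slope_lemma (c d : ℝ) (hc : c ≠ 0) :
    Tendsto (fun s : ℝ => (1 / (c - s * d) - 1 / c) / s) (nhdsWithin 0 (Set.Ioi 0))
      (nhds (d / c ^ 2)) := by
  have h1 : HasDerivAt (fun s : ℝ => c - s * d) (-d) 0 := by
    simpa using (hasDerivAt_mul_const d).const_sub c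
  have h2 : HasDerivAt (fun s : ℝ => (c - s * d)⁻¹) (d / c ^ 2) 0 := by
    have := h1.inv (by simpa using hc)
    exact (by simpa using this : HasDerivAt (fun s => c - s * d)⁻¹ (d / c ^ 2) 0)
  have h3 := hasDerivAt_iff_tendsto_slope.mp h2
  have h4 : Tendsto (slope (fun s : ℝ => (c - s * d)⁻¹) 0) (nhdsWithin 0 (Set.Ioi 0))
      (nhds (d / c ^ 2)) := h3.mono_left (nhdsWithin_mono _ (by intro t ht; simp at ht ⊢; linarith))
  refine h4.congr' ?_
  filter_upwards [self_mem_nhdsWithin] with s hs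
  rw [slope_def_field]
  simp only [one_div]
  rw [div_eq_div_iff] <;> simp at hs ⊢ <;> try ring
  · exact hs.ne'
  · exact hs.ne'


lemma am_hm_ineq {a b : ℝ} (ha : 0 < a) (hb : 0 < b) :
    1 / ((a + b) / 2) ≤ (1 / a + 1 / b) / 2 := by
  have key : (1 / a + 1 / b) / 2 - 1 / ((a + b) / 2)
      = (a - b) ^ 2 / (2 * a * b * (a + b)) := by field_simp; ring
  nlinarith [div_nonneg (sq_nonneg (a - b))
    (by positivity : (0:ℝ) ≤ 2 * a * b * (a + b)), key]

lemma ineq4 {a b : ℝ} (ha : 0 < a) (hb : 0 < b) :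
    (a - b) / a ^ 2 ≤ 1 / b - 1 / a := by
  have key : 1 / b - 1 / a - (a - b) / a ^ 2 = (a - b) ^ 2 / (b * a ^ 2) := by
    field_simp
  nlinarith [div_nonneg (sq_nonneg (a - b)) (by positivity : (0:ℝ) ≤ b * a ^ 2)]

lemma mid_strict (wi rr a b : ℝ) (hwi : 0 < wi) (ha : 0 ≤ a) (hb : 0 ≤ b) (hab : a ≠ b) :
    ((wi * Real.log (1 + a) - rr * a) + (wi * Real.log (1 + b) - rr * b)) / 2
      < wi * Real.log (1 + (a + b) / 2) - rr * ((a + b) / 2) := by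
  have h := mul_lt_mul_of_pos_left (log_strict_mid ha hb hab) hwi
  nlinarith [h]

lemma mid_weak (wi rr a b : ℝ) (hwi : 0 < wi) (ha : 0 ≤ a) (hb : 0 ≤ b) :
    ((wi * Real.log (1 + a) - rr * a) + (wi * Real.log (1 + b) - rr * b)) / 2
      ≤ wi * Real.log (1 + (a + b) / 2) - rr * ((a + b) / 2) := by
  rcases eq_or_ne a b with h | h
  · subst h
    have : 1 + (a + a) / 2 = 1 + a := by ring
    rw [this]; ring_nf; exact le_rfl
  · exact (mid_strict wi rr a b hwi ha hb h).le

/-- A Nash equilibrium of the client game maximizes the potential `H` over `D`;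
combined with strict concavity of `H`, the Nash equilibrium is unique. -/
theorem nashEquilibrium_maximizes_and_unique
    (N : ℕ) (hN : 0 < N) (μ r : ℝ) (hμ : 0 < μ) (hr : 0 < r)
    (w : Fin N → ℝ) (hw : ∀ i, 0 < w i)
    (D : Set (Fin N → ℝ)) (hD : D = {x | (∀ i, x i ≥ 0) ∧ (∑ i, x i) < μ})
    (H : (Fin N → ℝ) → ℝ)
    (hH : ∀ x, H x = (∑ i, w i * Real.log (1 + x i)) - r * (∑ i, x i)
        - 1 / (μ - ∑ i, x i))
    (u : Fin N → (Fin N → ℝ) → ℝ)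
    (hu : ∀ i x, u i x = w i * Real.log (1 + x i) - r * x i
        - 1 / (μ - ∑ j, x j))
    (xstar : Fin N → ℝ) (hxD : xstar ∈ D)
    (hnash : ∀ i : Fin N, ∀ t : ℝ, 0 ≤ t →
      t + ∑ j ∈ Finset.univ.erase i, xstar j < μ →
      u i (Function.update xstar i t) ≤ u i xstar) :
    (∀ x ∈ D, H x ≤ H xstar) ∧
    (∀ y ∈ D, (∀ i : Fin N, ∀ t : ℝ, 0 ≤ t →
        t + ∑ j ∈ Finset.univ.erase i, y j < μ →
        u i (Function.update y i t) ≤ u i y) → y = xstar) := by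
  subst hD
  obtain ⟨hx0, hxS⟩ := hxD
  -- split H into a coordinatewise sum plus a term in the total
  have hsplit : ∀ v : Fin N → ℝ,
      H v = (∑ i, (w i * Real.log (1 + v i) - r * v i)) - 1 / (μ - ∑ i, v i) := by
    intro v
    rw [hH, Finset.mul_sum, ← Finset.sum_sub_distrib]
  -- Key: any Nash equilibrium maximizes H
  have key : ∀ z : Fin N → ℝ, (∀ i, 0 ≤ z i) → (∑ i, z i) < μ →
      (∀ i : Fin N, ∀ t : ℝ, 0 ≤ t → t + ∑ j ∈ Finset.univ.erase i, z j < μ →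
        u i (Function.update z i t) ≤ u i z) →
      ∀ x : Fin N → ℝ, (∀ i, 0 ≤ x i) → (∑ i, x i) < μ → H x ≤ H z := by
    intro z hz0 hzS hzn x hxx0 hxxS
    have hc : 0 < μ - ∑ i, z i := by linarith
    have hb : 0 < μ - ∑ i, x i := by linarith
    -- Nash reformulated
    have hna : ∀ i : Fin N, ∀ t : ℝ, 0 ≤ t → t + ((∑ j, z j) - z i) < μ →
        w i * Real.log (1 + t) - r * t - 1 / (μ - (t + ((∑ j, z j) - z i)))
          ≤ w i * Real.log (1 + z i) - r * z i - 1 / (μ - ∑ j, z j) := by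
      intro i t ht h2
      have hesum : ∑ j ∈ Finset.univ.erase i, z j = (∑ j, z j) - z i :=
        Finset.sum_erase_eq_sub (Finset.mem_univ i)
      have h := hzn i t ht (by rw [hesum]; exact h2)
      rw [hu, hu] at h
      rw [Function.update_self, Finset.sum_update_of_mem (Finset.mem_univ i),
        ← Finset.erase_eq, hesum] at h
      exact h
    -- the main inequality via concavity and a limit argument
    have hmain : (∑ i, ((w i * Real.log (1 + x i) - r * x i)
          - (w i * Real.log (1 + z i) - r * z i)))
        ≤ ((∑ i, x i) - ∑ i, z i) / (μ - ∑ i, z i) ^ 2 := by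
      have hlim : Tendsto
          (fun s : ℝ => ∑ i, ((1 / ((μ - ∑ j, z j) - s * (x i - z i)) - 1 / (μ - ∑ j, z j)) / s))
          (nhdsWithin 0 (Set.Ioi 0))
          (nhds (∑ i, (x i - z i) / (μ - ∑ j, z j) ^ 2)) :=
        tendsto_finset_sum _ (fun i _ => slope_lemma _ (x i - z i) hc.ne')
      have hsum : (∑ i, (x i - z i) / (μ - ∑ j, z j) ^ 2)
          = ((∑ i, x i) - ∑ i, z i) / (μ - ∑ i, z i) ^ 2 := by
        rw [← Finset.sum_div, Finset.sum_sub_distrib]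
      rw [hsum] at hlim
      refine ge_of_tendsto hlim ?_
      have h1 : ∀ᶠ s in nhdsWithin (0:ℝ) (Set.Ioi 0), s ∈ Set.Ioo (0:ℝ) 1 :=
        eventually_of_mem (Ioo_mem_nhdsGT_of_mem (Set.left_mem_Ico.2 one_pos)) (fun s hs => hs)
      have h2 : ∀ᶠ s in nhdsWithin (0:ℝ) (Set.Ioi 0),
          ∀ i, s * (x i - z i) < μ - ∑ j, z j := by
        rw [eventually_all]
        intro i
        have ht : Tendsto (fun s : ℝ => s * (x i - z i)) (nhdsWithin 0 (Set.Ioi 0)) (nhds 0) := by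
          have hcont : Continuous (fun s : ℝ => s * (x i - z i)) := by continuity
          have := hcont.tendsto 0
          simpa using this.mono_left nhdsWithin_le_nhds
        exact ht.eventually_lt_const hc
      filter_upwards [h1, h2] with s hs hsd
      obtain ⟨hs0, hs1⟩ := hs
      refine Finset.sum_le_sum fun i _ => ?_
      -- per-coordinate inequality
      set t := z i + s * (x i - z i) with htdef
      have ht0 : 0 ≤ t := by
        have h1 := mul_nonneg (by linarith : (0:ℝ) ≤ 1 - s) (hz0 i)
        have h2 := mul_nonneg hs0.le (hxx0 i)
        have : t = (1 - s) * z i + s * x i := by rw [htdef]; ring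
        linarith [this ▸ add_nonneg h1 h2]
      have htμ : t + ((∑ j, z j) - z i) < μ := by
        have := hsd i
        rw [htdef]; linarith
      have hna' := hna i t ht0 htμ
      have hden : μ - (t + ((∑ j, z j) - z i)) = (μ - ∑ j, z j) - s * (x i - z i) := by
        rw [htdef]; ring
      rw [hden] at hna'
      -- concavity of the log part
      have hcon : (1 - s) * Real.log (1 + z i) + s * Real.log (1 + x i)
          ≤ Real.log (1 + t) := by
        have h := log_concave_aux (hz0 i) (hxx0 i) hs0.le hs1.le
        have : (1 - s) * z i + s * x i = t := by rw [htdef]; ring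
        rwa [this] at h
      have hwcon : w i * ((1 - s) * Real.log (1 + z i) + s * Real.log (1 + x i))
          ≤ w i * Real.log (1 + t) := mul_le_mul_of_nonneg_left hcon (hw i).le
      -- combine: s * (g(x i) - g(z i)) ≤ g(t) - g(z i) ≤ 1/(c - s d) - 1/c
      rw [le_div_iff₀ hs0]
      nlinarith [hwcon, hna']
    -- conclude
    rw [hsplit x, hsplit z]
    have h4 : ((∑ i, x i) - ∑ i, z i) / (μ - ∑ i, z i) ^ 2
        ≤ 1 / (μ - ∑ i, x i) - 1 / (μ - ∑ i, z i) := by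
      have h := ineq4 hc hb
      have he : (μ - ∑ i, z i) - (μ - ∑ i, x i) = (∑ i, x i) - ∑ i, z i := by ring
      rwa [he] at h
    have h5 : (∑ i, ((w i * Real.log (1 + x i) - r * x i)
          - (w i * Real.log (1 + z i) - r * z i)))
        = (∑ i, (w i * Real.log (1 + x i) - r * x i))
          - ∑ i, (w i * Real.log (1 + z i) - r * z i) := Finset.sum_sub_distrib _ _
    linarith [hmain]
  refine ⟨fun x hx => key xstar hx0 hxS hnash x hx.1 hx.2, ?_⟩
  intro y hy hyn
  obtain ⟨hy0, hyS⟩ := hy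
  have h1 : H y ≤ H xstar := key xstar hx0 hxS hnash y hy0 hyS
  have h2 : H xstar ≤ H y := key y hy0 hyS hyn xstar hx0 hxS
  by_contra hne
  obtain ⟨j, hj⟩ : ∃ j, y j ≠ xstar j := Function.ne_iff.mp hne
  set m : Fin N → ℝ := fun i => (y i + xstar i) / 2 with hmdef
  have hm0 : ∀ i, 0 ≤ m i := fun i => by
    have := hy0 i; have := hx0 i
    simp only [hmdef]; positivity
  have hmS : ∑ i, m i = ((∑ i, y i) + ∑ i, xstar i) / 2 := by
    simp only [hmdef]
    rw [← Finset.sum_div, Finset.sum_add_distrib]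
  have hmS' : ∑ i, m i < μ := by rw [hmS]; linarith
  have hkey := key xstar hx0 hxS hnash m hm0 hmS'
  -- strict concavity: H xstar < H m
  have hsum_lt : ∑ i, ((w i * Real.log (1 + y i) - r * y i)
        + (w i * Real.log (1 + xstar i) - r * xstar i)) / 2
      < ∑ i, (w i * Real.log (1 + m i) - r * m i) := by
    refine Finset.sum_lt_sum (fun i _ => ?_) ⟨j, Finset.mem_univ j, ?_⟩
    · have h := mid_weak (w i) r (y i) (xstar i) (hw i) (hy0 i) (hx0 i)
      simpa only [hmdef] using h
    · have h := mid_strict (w j) r (y j) (xstar j) (hw j) (hy0 j) (hx0 j) hj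
      simpa only [hmdef] using h
  have hφ : 1 / (μ - ∑ i, m i) ≤ (1 / (μ - ∑ i, y i) + 1 / (μ - ∑ i, xstar i)) / 2 := by
    have hby : 0 < μ - ∑ i, y i := by linarith
    have hbx : 0 < μ - ∑ i, xstar i := by linarith
    have hbm : μ - ∑ i, m i = ((μ - ∑ i, y i) + (μ - ∑ i, xstar i)) / 2 := by
      rw [hmS]; ring
    rw [hbm]
    exact am_hm_ineq hby hbx
  have hHy : H y = H xstar := le_antisymm h1 h2
  have hsum_half : ∑ i, ((w i * Real.log (1 + y i) - r * y i)
        + (w i * Real.log (1 + xstar i) - r * xstar i)) / 2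
      = ((∑ i, (w i * Real.log (1 + y i) - r * y i))
        + ∑ i, (w i * Real.log (1 + xstar i) - r * xstar i)) / 2 := by
    rw [← Finset.sum_div, Finset.sum_add_distrib]
  have hHm : H xstar < H m := by
    rw [hsplit m, hsplit xstar]
    have hy' := hsplit y
    have hx' := hsplit xstar
    rw [hy', hx'] at hHy
    rw [hsum_half] at hsum_lt
    linarith
  rw [hsplit m, hsplit xstar] at *
  linarith
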